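/- Let n ≥ 3 and let P be an edge-probability matrix on n nodes with p̄(P) > 0. If there exists an admissible community assignment c with γ(c,P) < 0 (equivalently, p̄_in(c,P) < p̄_out(c,P)), then there exists an admissible community assignment c' with γ(c',P) > 0 (equivalently, p̄_in(c',P) > p̄_out(c',P)). -/

import Mathlib

open Finset

/-- The set of unordered pairs of distinct nodes, represented as ordered pairs `(i, j)`
with `i < j`. -/
def allPairs (n : ℕ) : Finset (Fin n × Fin n) :=
  Finset.univ.filter (fun p => p.1 < p.2)

/-- Intra-community pairs of the community assignment `c`. -/
def pairsIn {n K : ℕ} (c : Fin n → Fin K) : Finset (Fin n × Fin n) :=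
  Finset.univ.filter (fun p => p.1 < p.2 ∧ c p.1 = c p.2)

/-- Inter-community pairs of the community assignment `c`. -/
def pairsOut {n K : ℕ} (c : Fin n → Fin K) : Finset (Fin n × Fin n) :=
  Finset.univ.filter (fun p => p.1 < p.2 ∧ c p.1 ≠ c p.2)

/-- Arithmetic mean of `P i j` over a finite set of pairs. -/
noncomputable def meanOver {n : ℕ} (S : Finset (Fin n × Fin n))
    (P : Fin n → Fin n → ℝ) : ℝ :=
  (∑ p ∈ S, P p.1 p.2) / S.card

/-- `p̄(P)`: mean edge probability over all pairs of distinct nodes. -/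
noncomputable def pbar {n : ℕ} (P : Fin n → Fin n → ℝ) : ℝ :=
  meanOver (allPairs n) P

/-- `p̄_in(c, P)`: mean edge probability over intra-community pairs. -/
noncomputable def pbarIn {n K : ℕ} (c : Fin n → Fin K) (P : Fin n → Fin n → ℝ) : ℝ :=
  meanOver (pairsIn c) P

/-- `p̄_out(c, P)`: mean edge probability over inter-community pairs. -/
noncomputable def pbarOut {n K : ℕ} (c : Fin n → Fin K) (P : Fin n → Fin n → ℝ) : ℝ :=
  meanOver (pairsOut c) P

/-- The homophily parameter `γ(c, P)`. -/
noncomputable def gamma {n K : ℕ} (c : Fin n → Fin K) (P : Fin n → Fin n → ℝ) : ℝ :=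
  (pbarIn c P - pbarOut c P) / pbar P

/-- An edge-probability matrix: symmetric, zero diagonal, entries in `[0,1]` off the
diagonal. -/
def IsEdgeProbMatrix {n : ℕ} (P : Fin n → Fin n → ℝ) : Prop :=
  (∀ i j, P i j = P j i) ∧ (∀ i, P i i = 0) ∧
    (∀ i j, i ≠ j → 0 ≤ P i j ∧ P i j ≤ 1)

/-- A community assignment is admissible if some community contains at least two nodes
and at least two communities are nonempty. -/
def Admissible {n K : ℕ} (c : Fin n → Fin K) : Prop :=
  (∃ i j : Fin n, i ≠ j ∧ c i = c j) ∧ (∃ i j : Fin n, c i ≠ c j)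

/-- For `n ≥ 3` and an edge-probability matrix `P` with `p̄(P) > 0`,
if some admissible community assignment has `γ(c,P) < 0` (equivalently
`p̄_in < p̄_out`), then some admissible community assignment has `γ(c',P) > 0`
(equivalently `p̄_in > p̄_out`). -/
lemma meanOver_const_val {n : ℕ} {S : Finset (Fin n × Fin n)} {P : Fin n → Fin n → ℝ} {M : ℝ}
    (hS : S.Nonempty) (h : ∀ p ∈ S, P p.1 p.2 = M) : meanOver S P = M := by
  unfold meanOver
  rw [Finset.sum_congr rfl h, Finset.sum_const, nsmul_eq_mul]
  exact mul_div_cancel_left₀ M (by exact_mod_cast Finset.card_ne_zero.mpr hS)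

theorem negative_homophily_implies_positive_homophily (n : ℕ) (hn : 3 ≤ n)
    (P : Fin n → Fin n → ℝ) (hP : IsEdgeProbMatrix P) (hp : 0 < pbar P)
    (h : ∃ (K : ℕ) (c : Fin n → Fin K), 1 ≤ K ∧ Admissible c ∧
      gamma c P < 0 ∧ pbarIn c P < pbarOut c P) :
    ∃ (K' : ℕ) (c' : Fin n → Fin K'), 1 ≤ K' ∧ Admissible c' ∧
      0 < gamma c' P ∧ pbarOut c' P < pbarIn c' P := by
  classical
  obtain ⟨K, c, hK, ⟨⟨a, b, hab, hcab⟩, ⟨a', b', hcab'⟩⟩, _, hlt⟩ := h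
  -- allPairs is nonempty
  have hA : (allPairs n).Nonempty := by
    refine ⟨(⟨0, by omega⟩, ⟨1, by omega⟩), ?_⟩
    simp only [allPairs, Finset.mem_filter, Finset.mem_univ, true_and]
    exact Fin.mk_lt_mk.mpr (by omega)
  obtain ⟨m, hmA, hmax⟩ := (allPairs n).exists_max_image (fun p => P p.1 p.2) hA
  set M := P m.1 m.2 with hM
  have hm12 : m.1 < m.2 := by simpa [allPairs] using hmA
  have hmne : m.1 ≠ m.2 := ne_of_lt hm12
  -- there is a pair with value strictly below M
  have hexlt : ∃ r ∈ allPairs n, P r.1 r.2 < M := by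
    by_contra hcon
    push_neg at hcon
    have hconst : ∀ p ∈ allPairs n, P p.1 p.2 = M := fun p hp' =>
      le_antisymm (hmax p hp') (hcon p hp')
    -- pairsIn c and pairsOut c nonempty, contained in allPairs
    have hInSub : pairsIn c ⊆ allPairs n := fun p hp' => by
      simp [pairsIn] at hp'; simp [allPairs, hp'.1]
    have hOutSub : pairsOut c ⊆ allPairs n := fun p hp' => by
      simp [pairsOut] at hp'; simp [allPairs, hp'.1]
    have hInNe : (pairsIn c).Nonempty := by
      rcases lt_or_gt_of_ne hab with hl | hl
      · exact ⟨(a, b), by simp [pairsIn, hl, hcab]⟩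
      · exact ⟨(b, a), by simp [pairsIn, hl, hcab.symm]⟩
    have hOutNe : (pairsOut c).Nonempty := by
      have hab' : a' ≠ b' := fun e => hcab' (by rw [e])
      rcases lt_or_gt_of_ne hab' with hl | hl
      · exact ⟨(a', b'), by simp [pairsOut, hl, hcab']⟩
      · exact ⟨(b', a'), by simp [pairsOut, hl, Ne.symm hcab']⟩
    have h1 : pbarIn c P = M :=
      meanOver_const_val hInNe (fun p hp' => hconst p (hInSub hp'))
    have h2 : pbarOut c P = M :=
      meanOver_const_val hOutNe (fun p hp' => hconst p (hOutSub hp'))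
    rw [h1, h2] at hlt
    exact lt_irrefl _ hlt
  obtain ⟨r, hrA, hrlt⟩ := hexlt
  -- the new assignment
  refine ⟨n, fun x => if x = m.2 then m.1 else x, by omega, ?_, ?_⟩
  · constructor
    · exact ⟨m.1, m.2, hmne, by simp [hmne]⟩
    · obtain ⟨k, hk1, hk2⟩ : ∃ k : Fin n, k ≠ m.1 ∧ k ≠ m.2 := by
        by_contra hcon
        push_neg at hcon
        have : ∀ k : Fin n, k = m.1 ∨ k = m.2 := fun k => by
          by_cases h1 : k = m.1
          · exact Or.inl h1
          · exact Or.inr (hcon k h1)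
        have hcard : (Finset.univ : Finset (Fin n)).card ≤ ({m.1, m.2} : Finset (Fin n)).card := by
          apply Finset.card_le_card
          intro k _
          rcases this k with h1 | h1 <;> simp [h1]
        simp [Finset.card_univ] at hcard
        have : ({m.1, m.2} : Finset (Fin n)).card ≤ 2 := Finset.card_insert_le _ _ |>.trans (by simp)
        omega
      exact ⟨k, m.2, by simp [hk2, hk1, Ne.symm hmne]⟩
  · -- compute pairsIn and pairsOut of c'
    have hIn : pairsIn (fun x : Fin n => if x = m.2 then m.1 else x) = {m} := by
      ext p
      simp only [pairsIn, Finset.mem_filter, Finset.mem_univ, true_and, Finset.mem_singleton]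
      constructor
      · rintro ⟨hlt', heq⟩
        by_cases h1 : p.1 = m.2
        · exfalso
          have h2 : p.2 ≠ m.2 := by intro e; rw [h1, e] at hlt'; exact lt_irrefl _ hlt'
          simp [h1, h2] at heq
          rw [h1, ← heq] at hlt'
          exact absurd (hm12.trans hlt') (lt_irrefl _ ∘ (heq ▸ ·))
        · by_cases h2 : p.2 = m.2
          · simp [h1, h2] at heq
            exact Prod.ext heq h2
          · simp [h1, h2] at heq
            exact absurd heq (ne_of_lt hlt')
      · rintro rfl
        exact ⟨hm12, by simp [hmne]⟩
    have hOut : pairsOut (fun x : Fin n => if x = m.2 then m.1 else x) = allPairs n \ {m} := by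
      ext p
      simp only [pairsOut, Finset.mem_filter, Finset.mem_univ, true_and, Finset.mem_sdiff,
        Finset.mem_singleton, allPairs]
      constructor
      · rintro ⟨hlt', hne⟩
        refine ⟨hlt', fun e => hne ?_⟩
        subst e; simp [hmne]
      · rintro ⟨hpA, hne⟩
        refine ⟨hpA, fun heq => hne ?_⟩
        have : p ∈ pairsIn (fun x : Fin n => if x = m.2 then m.1 else x) := by
          simp [pairsIn, hpA, heq]
        rw [hIn] at this
        simpa using this
    have hpIn : pbarIn (fun x : Fin n => if x = m.2 then m.1 else x) P = M := by
      rw [pbarIn, hIn]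
      simp [meanOver, hM]
    have hrne : r ≠ m := fun e => by rw [e] at hrlt; exact lt_irrefl _ hrlt
    have hrmem : r ∈ allPairs n \ {m} := by simp [hrA, hrne]
    have hSne : (allPairs n \ {m}).Nonempty := ⟨r, hrmem⟩
    have hpOut : pbarOut (fun x : Fin n => if x = m.2 then m.1 else x) P < M := by
      rw [pbarOut, hOut, meanOver]
      rw [div_lt_iff₀ (by exact_mod_cast Finset.card_pos.mpr hSne)]
      calc ∑ p ∈ allPairs n \ {m}, P p.1 p.2
          < ∑ p ∈ allPairs n \ {m}, M := by
            apply Finset.sum_lt_sum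
            · intro p hp'
              exact hmax p (Finset.mem_sdiff.mp hp').1
            · exact ⟨r, hrmem, hrlt⟩
        _ = M * (allPairs n \ {m}).card := by rw [Finset.sum_const, nsmul_eq_mul, mul_comm]
    have hmain : pbarOut (fun x : Fin n => if x = m.2 then m.1 else x) P
        < pbarIn (fun x : Fin n => if x = m.2 then m.1 else x) P := by rw [hpIn]; exact hpOut
    exact ⟨div_pos (sub_pos.mpr hmain) hp, hmain⟩
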